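/- arXiv:2006.02316 — 3 statements merged into one kernel-verified Lean document; each statement's English description precedes it below -/
import Mathlib

section
/- Let p be a prime, f : ℤ_p → ℤ_p a 1-Lipschitz function, x an integer with 0 ≤ x < p, and h the section of f at the vertex (1, x). Then the Schikhof reduced van der Put coefficients satisfy: b̃^h_0 = σ(b̃^f_0) if x = 0; b̃^h_0 = σ(b̃^f_x + b̃^f_0) if 1 ≤ x ≤ p − 1; and b̃^h_n = b̃^f_{x + n·p} for every integer n ≥ 1. -/
lemma digit_unique {p : ℕ} [Fact p.Prime] {r s : ℕ} (hr : r < p) (hs : s < p)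
    {a b : PadicInt p}
    (hab : (r : PadicInt p) + (p : PadicInt p) * a = (s : PadicInt p) + (p : PadicInt p) * b) :
    r = s ∧ a = b := by
  have hp : (p : PadicInt p) ≠ 0 := by
    exact_mod_cast Nat.cast_ne_zero.mpr (Fact.out (p := p.Prime)).ne_zero
  have hrs : r = s := by
    have := congrArg (PadicInt.toZMod (p := p)) hab
    simp only [map_add, map_mul, map_natCast, CharP.cast_eq_zero, zero_mul, add_zero] at this
    have h2 := (ZMod.natCast_eq_natCast_iff r s p).mp this
    rwa [Nat.ModEq, Nat.mod_eq_of_lt hr, Nat.mod_eq_of_lt hs] at h2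
  subst hrs
  have : (p : PadicInt p) * a = (p : PadicInt p) * b := by
    have := hab; linear_combination hab
  exact ⟨rfl, mul_left_cancel₀ hp this⟩

/-- `bt` is the sequence of Schikhof reduced van der Put coefficients of `f`:
`b̃^f_0 = f(0)` and, for `n ≥ 1`, `p^⌊log_p n⌋ · b̃^f_n = f(n) - f(n mod p^⌊log_p n⌋)`. -/
def IsSchikhofReduced (p : ℕ) [Fact p.Prime] (f : PadicInt p → PadicInt p)
    (bt : ℕ → PadicInt p) : Prop :=
  bt 0 = f 0 ∧
  ∀ n : ℕ, 1 ≤ n →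
    (p : PadicInt p) ^ Nat.log p n * bt n = f n - f ((n % p ^ Nat.log p n : ℕ))

/-- Schikhof reduced van der Put coefficients of the section of a 1-Lipschitz map at a
first-level vertex `x` (with `0 ≤ x < p`): `b̃^h_0 = σ(b̃^f_0)` if `x = 0`,
`b̃^h_0 = σ(b̃^f_x + b̃^f_0)` if `1 ≤ x ≤ p-1`, and `b̃^h_n = b̃^f_{x+np}` for `n ≥ 1`. -/
theorem schikhof_reduced_vanDerPut_of_section_level_one (p : ℕ) [Fact p.Prime]
    (f h : PadicInt p → PadicInt p)
    (hf : ∀ x y : PadicInt p, ‖f x - f y‖ ≤ ‖x - y‖)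
    (x : ℕ) (hx : x < p)
    -- `h` is the section of `f` at the vertex `(1, x)`
    (hsec : ∃ r : ℕ, r < p ∧ ∀ y : PadicInt p,
      f ((x : PadicInt p) + (p : PadicInt p) * y)
        = (r : PadicInt p) + (p : PadicInt p) * h y)
    -- `σ` is the digit shift on `ℤ_p`
    (σ : PadicInt p → PadicInt p)
    (hσ : ∀ a : PadicInt p, ∃ r : ℕ, r < p ∧ a = (r : PadicInt p) + (p : PadicInt p) * σ a)
    -- Schikhof reduced van der Put coefficients of `f` and of `h`
    (btf bth : ℕ → PadicInt p)
    (hbtf : IsSchikhofReduced p f btf) (hbth : IsSchikhofReduced p h bth) :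
    (x = 0 → bth 0 = σ (btf 0)) ∧
    (1 ≤ x → x ≤ p - 1 → bth 0 = σ (btf x + btf 0)) ∧
    (∀ n : ℕ, 1 ≤ n → bth n = btf (x + n * p)) := by
  obtain ⟨r, hr, hsecf⟩ := hsec
  have hp1 : 1 < p := (Fact.out (p := p.Prime)).one_lt
  have hpne : (p : PadicInt p) ≠ 0 := by
    exact_mod_cast Nat.cast_ne_zero.mpr (Fact.out (p := p.Prime)).ne_zero
  refine ⟨?_, ?_, ?_⟩
  · intro hx0
    subst hx0
    have h1 : f 0 = (r : PadicInt p) + (p : PadicInt p) * h 0 := by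
      have := hsecf 0; simpa using this
    obtain ⟨s, hs, hs2⟩ := hσ (btf 0)
    have key : (r : PadicInt p) + (p:PadicInt p) * h 0 = (s : PadicInt p) + (p:PadicInt p) * σ (btf 0) := by
      exact h1.symm.trans (hbtf.1.symm.trans hs2)
    have hb0 : bth 0 = h 0 := by
      have := hbth.1; simpa using this
    rw [hb0, (digit_unique hr hs key).2]
  · intro hx1 _
    have hlog : Nat.log p x = 0 := Nat.log_eq_zero_iff.mpr (Or.inl hx)
    have e := hbtf.2 x hx1
    rw [hlog] at e
    simp only [pow_zero, one_mul, Nat.mod_one, Nat.cast_zero] at e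
    have hfx : btf x + btf 0 = f x := by rw [e, hbtf.1]; ring
    have h1 : f x = (r : PadicInt p) + (p : PadicInt p) * h 0 := by
      have := hsecf 0; simpa using this
    obtain ⟨s, hs, hs2⟩ := hσ (btf x + btf 0)
    have key : (r : PadicInt p) + (p:PadicInt p) * h 0 = (s : PadicInt p) + (p:PadicInt p) * σ (btf x + btf 0) := by
      exact h1.symm.trans (hfx.symm.trans hs2)
    have hb0 : bth 0 = h 0 := by
      have := hbth.1; simpa using this
    rw [hb0, (digit_unique hr hs key).2]
  · intro n hn
    set k := Nat.log p n with hk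
    have hk1 : p ^ k ≤ n := Nat.pow_log_le_self p (by omega)
    have hk2 : n < p ^ (k + 1) := Nat.lt_pow_succ_log_self hp1 n
    have hm : Nat.log p (x + n * p) = k + 1 := by
      apply Nat.log_eq_of_pow_le_of_lt_pow
      · calc p ^ (k+1) = p ^ k * p := by ring
          _ ≤ n * p := Nat.mul_le_mul_right p hk1
          _ ≤ x + n * p := Nat.le_add_left _ _
      · calc x + n * p < (n + 1) * p := by nlinarith
          _ ≤ p ^ (k+1) * p := Nat.mul_le_mul_right p (by omega)
          _ = p ^ (k+2) := by ring
    have hmodlt : x + (n % p ^ k) * p < p ^ (k + 1) := by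
      have h1 : n % p ^ k < p ^ k := Nat.mod_lt n (Nat.pow_pos (by omega))
      have h2 : (n % p ^ k + 1) * p ≤ p ^ k * p := Nat.mul_le_mul_right p h1
      rw [Nat.add_mul, one_mul] at h2
      rw [pow_succ]
      omega
    have hmod : (x + n * p) % p ^ (k + 1) = x + (n % p ^ k) * p := by
      conv_lhs => rw [show x + n * p = (x + (n % p ^ k) * p) + p ^ (k+1) * (n / p ^ k) by
        rw [pow_succ]
        have := Nat.mod_add_div n (p ^ k)
        nlinarith [Nat.mod_add_div n (p ^ k)]]
      rw [Nat.add_mul_mod_self_left, Nat.mod_eq_of_lt hmodlt]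
    have e1 := hbtf.2 (x + n * p) (by nlinarith)
    rw [hm, hmod] at e1
    have e2 := hbth.2 n hn
    have hc1 : ((x + n * p : ℕ) : PadicInt p) = (x : PadicInt p) + (p : PadicInt p) * (n : ℕ) := by
      push_cast; ring
    have hc2 : ((x + (n % p ^ k) * p : ℕ) : PadicInt p)
        = (x : PadicInt p) + (p : PadicInt p) * ((n % p ^ k : ℕ) : PadicInt p) := by
      push_cast; ring
    rw [hc1, hc2, hsecf, hsecf] at e1
    have : (p : PadicInt p) ^ (k+1) * btf (x + n * p) = (p : PadicInt p) ^ (k+1) * bth n := by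
      rw [e1]
      rw [show ((r:PadicInt p) + (p:PadicInt p) * h n) - ((r:PadicInt p) + (p:PadicInt p) * h ((n % p ^ k : ℕ))) = (p:PadicInt p) * ((p : PadicInt p) ^ k * bth n) by rw [e2]; ring]
      ring
    exact (mul_left_cancel₀ (pow_ne_zero _ hpne) this).symm
end

section
/- Let p be a prime and f : ℤ_p → ℤ_p a 1-Lipschitz function, and let S(f) denote the set of all sections of f at vertices (k, m) with k ≥ 0 and 0 ≤ m < p^k. Then S(f) is finite if and only if both of the following hold: (a) the set { b^f_n : n ≥ 0 } of reduced van der Put coefficients of f is finite and every b^f_n has an eventually periodic digit expansion; (b) the p-kernel of the sequence n ↦ b^f_n is finite (i.e. the sequence of reduced van der Put coefficients is p-automatic). -/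
/-- The van der Put coefficients of `f : ℤ_p → ℤ_p`:
`B^f_n = f(n)` for `0 ≤ n < p` and `B^f_n = f(n) - f(n mod p^⌊log_p n⌋)` for `n ≥ p`. -/
noncomputable def vdpB (p : ℕ) [Fact p.Prime] (f : PadicInt p → PadicInt p) (n : ℕ) :
    PadicInt p :=
  if n < p then f n else f n - f ((n % p ^ Nat.log p n : ℕ))

/-- `h` is the section of `f` at the vertex `(k, m)`: for some integer `0 ≤ r < p^k`,
`f(m + p^k·y) = r + p^k·h(y)` for all `y ∈ ℤ_p`. -/
def IsSection (p : ℕ) [Fact p.Prime] (f h : PadicInt p → PadicInt p) (k m : ℕ) : Prop :=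
  ∃ r : ℕ, r < p ^ k ∧ ∀ y : PadicInt p,
    f ((m : PadicInt p) + (p : PadicInt p) ^ k * y)
      = (r : PadicInt p) + (p : PadicInt p) ^ k * h y

/-- The set `S(f)` of all sections of `f` at vertices `(k, m)`, `k ≥ 0`, `0 ≤ m < p^k`. -/
def SectionsSet (p : ℕ) [Fact p.Prime] (f : PadicInt p → PadicInt p) :
    Set (PadicInt p → PadicInt p) :=
  {h | ∃ k m : ℕ, m < p ^ k ∧ IsSection p f h k m}

/-- `x ∈ ℤ_p` has an eventually periodic digit expansion. -/
def HasEventuallyPeriodicDigits (p : ℕ) [Fact p.Prime] (x : PadicInt p) : Prop :=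
  ∃ a : ℕ → ℕ, (∀ i, a i < p) ∧
    x = (∑' i : ℕ, (a i : PadicInt p) * (p : PadicInt p) ^ i) ∧
    ∃ l m : ℕ, 1 ≤ m ∧ ∀ i : ℕ, l ≤ i → a (i + m) = a i

/-- The `p`-kernel of a sequence `a : ℕ → A`: all sequences `n ↦ a (j + n·p^i)` with
`i ≥ 0` and `0 ≤ j < p^i`. -/
def pKernel (p : ℕ) {A : Type*} (a : ℕ → A) : Set (ℕ → A) :=
  {s | ∃ i j : ℕ, j < p ^ i ∧ s = fun n => a (j + n * p ^ i)}


open PadicInt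

section AuxVdP
variable {p : ℕ} [hp : Fact p.Prime]


section Base
variable {p : ℕ} [hp : Fact p.Prime]

lemma pone : 1 < p := hp.1.one_lt

lemma pne0 : (p : ℤ_[p]) ≠ 0 := Nat.cast_ne_zero.mpr hp.1.ne_zero

lemma ppow_ne (k : ℕ) : (p : ℤ_[p]) ^ k ≠ 0 := pow_ne_zero _ pne0

lemma pcancel {k : ℕ} {a b : ℤ_[p]} (h : (p : ℤ_[p]) ^ k * a = (p : ℤ_[p]) ^ k * b) :
    a = b := mul_left_cancel₀ (ppow_ne k) h

lemma pdvd_of_norm {k : ℕ} {x : ℤ_[p]} (h : ‖x‖ ≤ (p : ℝ) ^ (-k : ℤ)) :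
    ∃ c : ℤ_[p], (p : ℤ_[p]) ^ k * c = x := by
  rw [norm_le_pow_iff_mem_span_pow, Ideal.mem_span_singleton] at h
  obtain ⟨c, hc⟩ := h
  exact ⟨c, hc.symm⟩

lemma norm_of_pdvd {k : ℕ} {x c : ℤ_[p]} (h : (p : ℤ_[p]) ^ k * c = x) :
    ‖x‖ ≤ (p : ℝ) ^ (-k : ℤ) := by
  rw [norm_le_pow_iff_mem_span_pow, Ideal.mem_span_singleton]
  exact ⟨c, h.symm⟩

/-- Uniqueness of residues. -/
lemma nat_resid_unique {k a b : ℕ} (ha : a < p ^ k) (hb : b < p ^ k)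
    (h : ∃ c : ℤ_[p], (p : ℤ_[p]) ^ k * c = (a : ℤ_[p]) - b) : a = b := by
  obtain ⟨c, hc⟩ := h
  have hd : ((p : ℤ) ^ k) ∣ ((a : ℤ) - b) := by
    rw [← pow_p_dvd_int_iff]
    exact ⟨c, by push_cast; rw [← hc]⟩
  obtain ⟨t, ht⟩ := hd
  have hb1 : -((p:ℤ)^k) < (a:ℤ) - b := by
    have : (b:ℤ) < (p:ℤ)^k := by exact_mod_cast hb
    omega
  have hb2 : (a:ℤ) - b < (p:ℤ)^k := by
    have : (a:ℤ) < (p:ℤ)^k := by exact_mod_cast ha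
    omega
  have hpq : (0:ℤ) < (p:ℤ) := by exact_mod_cast hp.1.pos
  have hpk : (0:ℤ) < (p:ℤ)^k := by positivity
  have ht0 : t = 0 := by nlinarith
  rw [ht0, mul_zero] at ht
  omega

lemma appr_unique (x : ℤ_[p]) {k r : ℕ} (hr : r < p ^ k)
    (h : ∃ c : ℤ_[p], (p : ℤ_[p]) ^ k * c = x - r) : x.appr k = r := by
  obtain ⟨c, hc⟩ := Ideal.mem_span_singleton'.1 (x.appr_spec k)
  refine nat_resid_unique (x.appr_lt k) hr ?_
  obtain ⟨d, hd⟩ := h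
  refine ⟨d - c, ?_⟩
  rw [mul_sub]
  rw [mul_comm] at hc
  rw [hd, hc]
  ring

/-- The `k`-fold tail (shift) of a `p`-adic integer. -/
noncomputable def tl (k : ℕ) (x : ℤ_[p]) : ℤ_[p] :=
  (Ideal.mem_span_singleton'.1 (x.appr_spec k)).choose

lemma tl_spec (k : ℕ) (x : ℤ_[p]) : (p : ℤ_[p]) ^ k * tl k x = x - x.appr k := by
  rw [mul_comm]; exact (Ideal.mem_span_singleton'.1 (x.appr_spec k)).choose_spec

lemma tl_unique {k : ℕ} {x z : ℤ_[p]} {r : ℕ} (hr : r < p ^ k)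
    (h : x = (r : ℤ_[p]) + (p : ℤ_[p]) ^ k * z) : tl k x = z ∧ x.appr k = r := by
  have ha : x.appr k = r := appr_unique x hr ⟨z, by rw [h]; ring⟩
  refine ⟨pcancel (k := k) ?_, ha⟩
  rw [tl_spec, ha, h]; ring

lemma tl_zero (x : ℤ_[p]) : tl 0 x = x := by
  have h := tl_spec 0 x
  have h0 : x.appr 0 = 0 := Nat.lt_one_iff.mp (by simpa using x.appr_lt 0)
  simpa [h0] using h

lemma appr_add_pow (k : ℕ) (x : ℤ_[p]) :
    ∀ k' : ℕ, x.appr (k + k') = x.appr k + p ^ k * (tl k x).appr k' := by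
  intro k'
  refine appr_unique x ?_ ?_
  · have h1 := x.appr_lt k
    have h2 := (tl k x).appr_lt k'
    calc x.appr k + p ^ k * (tl k x).appr k'
        < p ^ k + p ^ k * (tl k x).appr k' := Nat.add_lt_add_right h1 _
      _ = p ^ k * ((tl k x).appr k' + 1) := by ring
      _ ≤ p ^ k * p ^ k' := Nat.mul_le_mul_left _ h2
      _ = p ^ (k + k') := (pow_add p k k').symm
  · refine ⟨tl k' (tl k x), ?_⟩
    have h1 := tl_spec k x
    have h2 := tl_spec k' (tl k x)
    push_cast
    rw [pow_add, mul_assoc, h2, mul_sub, h1]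
    ring

lemma tl_tl (k k' : ℕ) (x : ℤ_[p]) : tl k' (tl k x) = tl (k + k') x := by
  refine pcancel (k := k + k') ?_
  rw [tl_spec, appr_add_pow k x k']
  rw [pow_add, mul_assoc, tl_spec, mul_sub, tl_spec]
  push_cast
  ring

lemma tl_add_pow_mul (k : ℕ) (x c : ℤ_[p]) : tl k (x + (p : ℤ_[p]) ^ k * c) = tl k x + c := by
  have := tl_spec k x
  exact (tl_unique (x := x + (p:ℤ_[p])^k * c) (x.appr_lt k) (by linear_combination -this)).1

end Base



/-- The `i`-th digit of `x`. -/
noncomputable def dgt (i : ℕ) (x : ℤ_[p]) : ℕ := (tl i x).appr 1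

lemma dgt_lt (i : ℕ) (x : ℤ_[p]) : dgt i x < p := by
  have := (tl i x).appr_lt 1
  simpa [dgt] using this

lemma dgt_tl (k n : ℕ) (x : ℤ_[p]) : dgt n (tl k x) = dgt (k + n) x := by
  rw [dgt, dgt, tl_tl]

lemma appr_eq_sum_dgt (x : ℤ_[p]) (n : ℕ) :
    x.appr n = ∑ i ∈ Finset.range n, dgt i x * p ^ i := by
  induction n with
  | zero => simpa using Nat.lt_one_iff.mp (by simpa using x.appr_lt 0)
  | succ n ih =>
    have h := appr_add_pow n x 1
    rw [Finset.sum_range_succ, ← ih, h, dgt]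
    ring

lemma summable_digitlike (b : ℕ → ℕ) :
    Summable (fun i : ℕ => (b i : ℤ_[p]) * (p : ℤ_[p]) ^ i) := by
  have hlt : (p : ℝ)⁻¹ < 1 := by
    rw [inv_lt_one_iff₀]
    right
    exact_mod_cast pone
  have hge : (0:ℝ) ≤ (p:ℝ)⁻¹ := by positivity
  refine Summable.of_norm_bounded
    (summable_geometric_of_lt_one hge hlt) (fun i => ?_)
  show ‖((b i : ℕ) : ℤ_[p]) * (p:ℤ_[p]) ^ i‖ ≤ ((p:ℝ)⁻¹) ^ i
  rw [norm_mul, norm_pow, PadicInt.norm_p]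
  calc ‖((b i : ℕ) : ℤ_[p])‖ * ((p:ℝ)⁻¹) ^ i ≤ 1 * ((p:ℝ)⁻¹) ^ i := by
        have := norm_le_one ((b i : ℕ) : ℤ_[p])
        have hpow : (0:ℝ) ≤ ((p:ℝ)⁻¹)^i := by positivity
        nlinarith
    _ = ((p:ℝ)⁻¹) ^ i := one_mul _

lemma x_eq_tsum_dgt (x : ℤ_[p]) :
    x = ∑' i : ℕ, (dgt i x : ℤ_[p]) * (p : ℤ_[p]) ^ i := by
  have hsum := summable_digitlike (p := p) (fun i => dgt i x)
  have hps : ∀ n : ℕ, ∑ i ∈ Finset.range n, (dgt i x : ℤ_[p]) * (p:ℤ_[p]) ^ i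
      = ((x.appr n : ℕ) : ℤ_[p]) := by
    intro n
    rw [appr_eq_sum_dgt]
    push_cast
    rfl
  have h1 : Filter.Tendsto (fun n => ∑ i ∈ Finset.range n, (dgt i x : ℤ_[p]) * (p:ℤ_[p]) ^ i)
      Filter.atTop (nhds (∑' i : ℕ, (dgt i x : ℤ_[p]) * (p : ℤ_[p]) ^ i)) :=
    hsum.hasSum.tendsto_sum_nat
  have h2 : Filter.Tendsto (fun n => ∑ i ∈ Finset.range n, (dgt i x : ℤ_[p]) * (p:ℤ_[p]) ^ i)
      Filter.atTop (nhds x) := by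
    rw [show (fun n => ∑ i ∈ Finset.range n, (dgt i x : ℤ_[p]) * (p:ℤ_[p]) ^ i)
        = fun n => ((x.appr n : ℕ) : ℤ_[p]) from funext hps]
    rw [← tendsto_sub_nhds_zero_iff]
    have hb : ∀ n : ℕ, ‖((x.appr n : ℕ) : ℤ_[p]) - x‖ ≤ ((p:ℝ)⁻¹) ^ n := by
      intro n
      have := norm_of_pdvd (tl_spec n x)
      calc ‖((x.appr n : ℕ) : ℤ_[p]) - x‖ = ‖x - ((x.appr n : ℕ) : ℤ_[p])‖ := norm_sub_rev _ _
        _ ≤ (p:ℝ) ^ (-n : ℤ) := this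
        _ = ((p:ℝ)⁻¹) ^ n := by
            rw [zpow_neg, zpow_natCast, inv_pow]
    have ht : Filter.Tendsto (fun n : ℕ => ((p:ℝ)⁻¹) ^ n) Filter.atTop (nhds 0) := by
      apply tendsto_pow_atTop_nhds_zero_of_lt_one (by positivity)
      rw [inv_lt_one_iff₀]; right; exact_mod_cast pone
    exact squeeze_zero_norm hb ht
  exact tendsto_nhds_unique h2 h1

lemma evPeriodic_of_finite_tails (x : ℤ_[p])
    (h : (Set.range fun k => tl k x).Finite) : HasEventuallyPeriodicDigits p x := by
  have hni : ¬ Function.Injective (fun k => tl k x) := by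
    intro hinj
    exact (Set.infinite_range_of_injective hinj) h
  rw [Function.not_injective_iff] at hni
  obtain ⟨i, j, heq, hne⟩ := hni
  -- wlog i < j
  obtain ⟨i, j, hij, heq⟩ : ∃ i j : ℕ, i < j ∧ tl i x = tl j x := by
    rcases lt_or_gt_of_ne hne with h' | h'
    · exact ⟨i, j, h', heq⟩
    · exact ⟨j, i, h', heq.symm⟩
  refine ⟨fun n => dgt n x, fun n => dgt_lt n x, x_eq_tsum_dgt x, i, j - i, by omega, ?_⟩
  intro t ht
  show dgt (t + (j - i)) x = dgt t x
  obtain ⟨n, rfl⟩ : ∃ n, t = i + n := ⟨t - i, by omega⟩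
  have e1 : i + n + (j - i) = j + n := by omega
  rw [e1, ← dgt_tl j n x, ← dgt_tl i n x, heq]

lemma rat_of_evPeriodic (x : ℤ_[p]) (h : HasEventuallyPeriodicDigits p x) :
    ∃ v : ℕ, 1 ≤ v ∧ ∃ u : ℤ, (v : ℤ_[p]) * x = (u : ℤ_[p]) := by
  obtain ⟨a, hlt, hx, l, m, hm, hper⟩ := h
  set N := l + m with hN
  have hsum : Summable (fun i : ℕ => (a i : ℤ_[p]) * (p:ℤ_[p]) ^ i) := summable_digitlike a
  have hsum2 : Summable (fun i : ℕ => (a (i + N) : ℤ_[p]) * (p:ℤ_[p]) ^ i) :=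
    summable_digitlike _
  set y := ∑' i : ℕ, (a (i + N) : ℤ_[p]) * (p:ℤ_[p]) ^ i with hy
  -- x = C₀ + p^N y
  have h1 : (∑ i ∈ Finset.range N, (a i : ℤ_[p]) * (p:ℤ_[p]) ^ i)
      + ∑' i : ℕ, (a (i + N) : ℤ_[p]) * (p:ℤ_[p]) ^ (i + N) = x := by
    rw [hx]; exact Summable.sum_add_tsum_nat_add N hsum
  have hmul : ∑' i : ℕ, (a (i + N) : ℤ_[p]) * (p:ℤ_[p]) ^ (i + N) = (p:ℤ_[p])^N * y := by
    rw [hy, ← hsum2.tsum_mul_left ((p:ℤ_[p])^N)]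
    exact tsum_congr (fun i => by rw [pow_add]; ring)
  have h1' : x = (∑ i ∈ Finset.range N, (a i : ℤ_[p]) * (p:ℤ_[p]) ^ i)
      + (p:ℤ_[p])^N * y := by
    rw [← h1, hmul]
  -- y = C₁ + p^m y
  have h2 : (∑ i ∈ Finset.range m, (a (i + N) : ℤ_[p]) * (p:ℤ_[p]) ^ i)
      + ∑' i : ℕ, (a ((i + m) + N) : ℤ_[p]) * (p:ℤ_[p]) ^ (i + m) = y := by
    rw [hy]; exact Summable.sum_add_tsum_nat_add m hsum2
  have hmul2 : ∑' i : ℕ, (a ((i + m) + N) : ℤ_[p]) * (p:ℤ_[p]) ^ (i + m)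
      = (p:ℤ_[p])^m * y := by
    rw [hy, ← hsum2.tsum_mul_left ((p:ℤ_[p])^m)]
    refine tsum_congr (fun i => ?_)
    have hpe : a (i + m + N) = a (i + N) := by
      have := hper (i + N) (by omega)
      rw [show i + N + m = i + m + N by omega] at this
      exact this
    rw [hpe, pow_add]
    ring
  have h2' : y = (∑ i ∈ Finset.range m, (a (i + N) : ℤ_[p]) * (p:ℤ_[p]) ^ i)
      + (p:ℤ_[p])^m * y := by
    rw [hmul2] at h2
    exact h2.symm
  set C0 : ℕ := ∑ i ∈ Finset.range N, a i * p ^ i with hC0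
  set C1 : ℕ := ∑ i ∈ Finset.range m, a (i + N) * p ^ i with hC1
  have hc0 : (∑ i ∈ Finset.range N, (a i : ℤ_[p]) * (p:ℤ_[p]) ^ i) = (C0 : ℤ_[p]) := by
    rw [hC0]; push_cast; ring
  have hc1 : (∑ i ∈ Finset.range m, (a (i + N) : ℤ_[p]) * (p:ℤ_[p]) ^ i) = (C1 : ℤ_[p]) := by
    rw [hC1]; push_cast; ring
  refine ⟨p ^ m - 1, ?_, (p ^ m - 1 : ℕ) * C0 - p ^ N * C1, ?_⟩
  · have : 2 ≤ p := pone
    have : p ≤ p ^ m := le_self_pow₀ (by omega) (by omega)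
    omega
  · have hpm1 : ((p ^ m - 1 : ℕ) : ℤ_[p]) = (p:ℤ_[p])^m - 1 := by
      have h2p : 1 ≤ p ^ m := Nat.one_le_pow _ _ hp.1.pos
      push_cast [Nat.cast_sub h2p]
      ring
    rw [hc0] at h1'
    rw [hc1] at h2'
    push_cast [hpm1]
    linear_combination ((p:ℤ_[p])^m - 1) * h1' - (p:ℤ_[p])^N * h2'

/-- The canonical section of `f` at `(k, m)`. -/
noncomputable def sct (f : ℤ_[p] → ℤ_[p]) (k m : ℕ) : ℤ_[p] → ℤ_[p] :=
  fun y => tl k (f ((m : ℤ_[p]) + (p : ℤ_[p]) ^ k * y))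

variable {f : ℤ_[p] → ℤ_[p]}

lemma appr_congr {k : ℕ} {x x' : ℤ_[p]} (h : ∃ c, (p:ℤ_[p]) ^ k * c = x - x') :
    x.appr k = x'.appr k := by
  obtain ⟨c, hc⟩ := h
  refine appr_unique x (x'.appr_lt k) ⟨c + tl k x', ?_⟩
  have := tl_spec k x'
  rw [mul_add, hc, this]
  ring

lemma lip_pdvd (hf : ∀ x y : ℤ_[p], ‖f x - f y‖ ≤ ‖x - y‖) (k : ℕ) (a b : ℤ_[p])
    (h : ∃ c, (p:ℤ_[p]) ^ k * c = a - b) :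
    ∃ c, (p:ℤ_[p]) ^ k * c = f a - f b := by
  obtain ⟨c, hc⟩ := h
  exact pdvd_of_norm ((hf a b).trans (norm_of_pdvd hc))

lemma sct_spec (hf : ∀ x y : ℤ_[p], ‖f x - f y‖ ≤ ‖x - y‖) (k m : ℕ) (y : ℤ_[p]) :
    f ((m : ℤ_[p]) + (p : ℤ_[p]) ^ k * y)
      = ((f m).appr k : ℤ_[p]) + (p : ℤ_[p]) ^ k * sct f k m y := by
  set X := f ((m : ℤ_[p]) + (p : ℤ_[p]) ^ k * y) with hX
  have happr : X.appr k = (f m).appr k := by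
    refine appr_congr (lip_pdvd hf k _ _ ⟨y, by ring⟩)
  have := tl_spec k X
  rw [happr] at this
  have : (p:ℤ_[p])^k * sct f k m y = X - ((f m).appr k : ℤ_[p]) := this
  linear_combination -this

lemma isSection_sct (hf : ∀ x y : ℤ_[p], ‖f x - f y‖ ≤ ‖x - y‖) (k m : ℕ) :
    IsSection p f (sct f k m) k m :=
  ⟨(f m).appr k, (f m).appr_lt k, fun y => sct_spec hf k m y⟩

lemma eq_sct_of_isSection (hf : ∀ x y : ℤ_[p], ‖f x - f y‖ ≤ ‖x - y‖) {h : ℤ_[p] → ℤ_[p]}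
    {k m : ℕ} (hs : IsSection p f h k m) : h = sct f k m := by
  obtain ⟨r, hr, heq⟩ := hs
  funext y
  have h1 := heq y
  have h2 := sct_spec hf k m y
  have hrr : r = (f (m : ℤ_[p])).appr k := by
    refine nat_resid_unique hr ((f (m : ℤ_[p])).appr_lt k) ⟨sct f k m y - h y, ?_⟩
    rw [mul_sub]
    linear_combination h1 - h2
  rw [hrr] at h1
  refine pcancel (k := k) ?_
  linear_combination h2 - h1

lemma sectionsSet_eq (hf : ∀ x y : ℤ_[p], ‖f x - f y‖ ≤ ‖x - y‖) :
    SectionsSet p f = {h | ∃ k m : ℕ, m < p ^ k ∧ h = sct f k m} := by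
  ext h
  constructor
  · rintro ⟨k, m, hm, hs⟩
    exact ⟨k, m, hm, eq_sct_of_isSection hf hs⟩
  · rintro ⟨k, m, hm, rfl⟩
    exact ⟨k, m, hm, isSection_sct hf k m⟩

lemma sct_lip (hf : ∀ x y : ℤ_[p], ‖f x - f y‖ ≤ ‖x - y‖) (k m : ℕ) :
    ∀ x y : ℤ_[p], ‖sct f k m x - sct f k m y‖ ≤ ‖x - y‖ := by
  intro x y
  have h1 := sct_spec hf k m x
  have h2 := sct_spec hf k m y
  have key : (p:ℤ_[p])^k * (sct f k m x - sct f k m y)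
      = f ((m : ℤ_[p]) + (p : ℤ_[p]) ^ k * x) - f ((m : ℤ_[p]) + (p : ℤ_[p]) ^ k * y) := by
    linear_combination h2 - h1
  have hkn : ‖(p:ℤ_[p])^k‖ = ((p:ℝ))⁻¹ ^ k := by rw [norm_pow, PadicInt.norm_p]
  have hpos : (0:ℝ) < ((p:ℝ))⁻¹ ^ k := by
    have : (0:ℝ) < p := by exact_mod_cast hp.1.pos
    positivity
  have hnle := hf ((m : ℤ_[p]) + (p : ℤ_[p]) ^ k * x) ((m : ℤ_[p]) + (p : ℤ_[p]) ^ k * y)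
  have harg : (m : ℤ_[p]) + (p : ℤ_[p]) ^ k * x - ((m : ℤ_[p]) + (p : ℤ_[p]) ^ k * y)
      = (p:ℤ_[p])^k * (x - y) := by ring
  rw [harg] at hnle
  rw [← key] at hnle
  rw [norm_mul, norm_mul, hkn] at hnle
  exact le_of_mul_le_mul_left hnle hpos

lemma continuous_of_lip {g : ℤ_[p] → ℤ_[p]} (hg : ∀ x y : ℤ_[p], ‖g x - g y‖ ≤ ‖x - y‖) :
    Continuous g := by
  have : LipschitzWith 1 g := by
    apply LipschitzWith.of_dist_le_mul
    intro x y
    simpa [dist_eq_norm] using hg x y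
  exact this.continuous

/-- Tail of `f` at a natural is a section value. -/
lemma tl_f_nat (j n : ℕ) : tl j (f n) = sct f j (n % p ^ j) ((n / p ^ j : ℕ) : ℤ_[p]) := by
  have harg : ((n : ℕ) : ℤ_[p]) = ((n % p ^ j : ℕ) : ℤ_[p]) + (p:ℤ_[p])^j * ((n / p ^ j : ℕ) : ℤ_[p]) := by
    push_cast
    rw [← Nat.cast_pow]
    exact_mod_cast congrArg (Nat.cast : ℕ → ℤ_[p]) (Nat.mod_add_div n (p^j)).symm
  rw [sct, harg]

lemma tl_sct_nat (hf : ∀ x y : ℤ_[p], ‖f x - f y‖ ≤ ‖x - y‖) (k m : ℕ) (j d : ℕ) :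
    tl j (sct f k m (d : ℤ_[p]))
      = sct f (k + j) ((m + d * p ^ k) % p ^ (k + j)) (((m + d * p ^ k) / p ^ (k + j) : ℕ) : ℤ_[p]) := by
  have h1 : sct f k m (d : ℤ_[p]) = tl k (f ((m + d * p ^ k : ℕ) : ℤ_[p])) := by
    rw [sct]
    congr 1
    congr 1
    push_cast
    ring
  rw [h1, tl_tl, tl_f_nat]

/-- Borrow lemma for tails of differences. -/
lemma tl_sub (k : ℕ) (x y : ℤ_[p]) :
    ∃ c : ℤ_[p], (c = 0 ∨ c = -1) ∧ tl k (x - y) = tl k x - tl k y + c := by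
  set z : ℤ := (x.appr k : ℤ) - (y.appr k : ℤ) - ((x - y).appr k : ℤ) with hz
  have hdvd : ((p:ℤ)^k) ∣ z := by
    rw [← pow_p_dvd_int_iff]
    refine ⟨tl k (x - y) - tl k x + tl k y, ?_⟩
    have e1 := tl_spec k x
    have e2 := tl_spec k y
    have e3 := tl_spec k (x - y)
    push_cast [hz]
    linear_combination e1 - e2 - e3
  obtain ⟨t, ht⟩ := hdvd
  have hx1 := x.appr_lt k
  have hy1 := y.appr_lt k
  have hxy1 := (x - y).appr_lt k
  have hpk : (0:ℤ) < (p:ℤ)^k := by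
    have : (0:ℤ) < (p:ℤ) := by exact_mod_cast hp.1.pos
    positivity
  have hb1 : -(2 * (p:ℤ)^k) < z := by
    have : ((y.appr k : ℤ)) < (p:ℤ)^k := by exact_mod_cast hy1
    have : (((x - y).appr k : ℤ)) < (p:ℤ)^k := by exact_mod_cast hxy1
    have : (0:ℤ) ≤ (x.appr k : ℤ) := Int.natCast_nonneg _
    omega
  have hb2 : z < (p:ℤ)^k := by
    have : ((x.appr k : ℤ)) < (p:ℤ)^k := by exact_mod_cast hx1
    have : (0:ℤ) ≤ (y.appr k : ℤ) := Int.natCast_nonneg _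
    have : (0:ℤ) ≤ ((x - y).appr k : ℤ) := Int.natCast_nonneg _
    omega
  have ht01 : t = 0 ∨ t = -1 := by
    rcases lt_trichotomy t (-1) with h' | h' | h'
    · exfalso; nlinarith
    · right; exact h'
    · left
      have h0 : 0 ≤ t := by omega
      rcases Nat.eq_zero_or_pos t.toNat with h'' | h''
      · omega
      · exfalso
        have : 1 ≤ t := by omega
        nlinarith
  refine ⟨(t : ℤ_[p]), ?_, ?_⟩
  · rcases ht01 with h' | h'
    · left; rw [h']; simp
    · right; rw [h']; simp
  · refine pcancel (k := k) ?_
    have e1 := tl_spec k x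
    have e2 := tl_spec k y
    have e3 := tl_spec k (x - y)
    have hzc : ((z : ℤ) : ℤ_[p]) = (p:ℤ_[p])^k * (t : ℤ_[p]) := by
      rw [ht]; push_cast; ring
    have hzc2 : ((z : ℤ) : ℤ_[p])
        = (x.appr k : ℤ_[p]) - (y.appr k : ℤ_[p]) - ((x - y).appr k : ℤ_[p]) := by
      rw [hz]; push_cast; ring
    rw [mul_add, mul_sub, e1, e2, e3]
    linear_combination hzc - hzc2

lemma log_add_mul {k m n : ℕ} (hm : m < p ^ k) (hn : 1 ≤ n) :
    Nat.log p (m + n * p ^ k) = k + Nat.log p n := by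
  have hp1 : 1 < p := pone
  set l := Nat.log p n with hl
  apply Nat.log_eq_of_pow_le_of_lt_pow
  · calc p ^ (k + l) = p ^ l * p ^ k := by rw [← pow_add]; ring_nf
      _ ≤ n * p ^ k := Nat.mul_le_mul_right _ (Nat.pow_log_le_self p (by omega))
      _ ≤ m + n * p ^ k := Nat.le_add_left _ _
  · have h2 : n < p ^ (l + 1) := Nat.lt_pow_succ_log_self hp1 n
    calc m + n * p ^ k < p ^ k + n * p ^ k := by omega
      _ = (n + 1) * p ^ k := by ring
      _ ≤ p ^ (l + 1) * p ^ k := Nat.mul_le_mul_right _ (by omega)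
      _ = p ^ (k + l + 1) := by rw [← pow_add]; ring_nf

lemma mod_add_mul {k m n : ℕ} (hm : m < p ^ k) :
    (m + n * p ^ k) % p ^ (k + Nat.log p n) = m + (n % p ^ Nat.log p n) * p ^ k := by
  set l := Nat.log p n with hl
  have hlp : 0 < p ^ l := Nat.pow_pos hp.1.pos
  have key : m + n * p ^ k = (m + (n % p ^ l) * p ^ k) + (n / p ^ l) * p ^ (k + l) := by
    have hd := Nat.mod_add_div n (p ^ l)
    calc m + n * p ^ k = m + (n % p ^ l + p ^ l * (n / p ^ l)) * p ^ k := by rw [hd]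
      _ = (m + (n % p ^ l) * p ^ k) + (n / p ^ l) * (p ^ k * p ^ l) := by ring
      _ = _ := by rw [← pow_add]
  rw [key, Nat.add_mul_mod_self_right]
  apply Nat.mod_eq_of_lt
  have h1 : n % p ^ l < p ^ l := Nat.mod_lt _ hlp
  calc m + (n % p ^ l) * p ^ k < p ^ k + (n % p ^ l) * p ^ k := by omega
    _ = (n % p ^ l + 1) * p ^ k := by ring
    _ ≤ p ^ l * p ^ k := Nat.mul_le_mul_right _ (by omega)
    _ = p ^ (k + l) := by rw [← pow_add]; ring_nf

variable {bf : ℕ → ℤ_[p]}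

lemma bf_lt_p (hbf : ∀ n : ℕ, (p : ℤ_[p]) ^ Nat.log p n * bf n = vdpB p f n)
    {n : ℕ} (hn : n < p) : bf n = f (n : ℤ_[p]) := by
  have hl : Nat.log p n = 0 := Nat.log_eq_zero_iff.mpr (Or.inl hn)
  have := hbf n
  rwa [hl, pow_zero, one_mul, vdpB, if_pos hn] at this

lemma bf_eq_sct_general (hf : ∀ x y : ℤ_[p], ‖f x - f y‖ ≤ ‖x - y‖)
    (hbf : ∀ n : ℕ, (p : ℤ_[p]) ^ Nat.log p n * bf n = vdpB p f n)
    {k m n : ℕ} (hm : m < p ^ k) (hn : p ≤ n) :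
    (p : ℤ_[p]) ^ Nat.log p n * bf (m + n * p ^ k)
      = sct f k m (n : ℤ_[p]) - sct f k m ((n % p ^ Nat.log p n : ℕ) : ℤ_[p]) := by
  have hp1 : 1 < p := pone
  have hn1 : 1 ≤ n := le_trans hp.1.pos hn
  set l := Nat.log p n with hl
  have hlog := log_add_mul (p := p) hm hn1
  have hmod := mod_add_mul (p := p) (n := n) hm
  set N := m + n * p ^ k with hN
  have hNp : ¬ N < p := by
    have h1 : 0 < p ^ k := Nat.pow_pos hp.1.pos
    have : n ≤ n * p ^ k := Nat.le_mul_of_pos_right _ h1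
    omega
  have hb := hbf N
  rw [vdpB, if_neg hNp, hN] at hb
  rw [hlog, hmod] at hb
  have e1 : f ((N : ℕ) : ℤ_[p]) = ((f (m : ℤ_[p])).appr k : ℤ_[p]) + (p:ℤ_[p]) ^ k * sct f k m (n : ℤ_[p]) := by
    rw [← sct_spec hf k m (n : ℤ_[p])]
    congr 1
    push_cast [hN]
    ring
  have e2 : f ((m + (n % p ^ l) * p ^ k : ℕ) : ℤ_[p])
      = ((f (m : ℤ_[p])).appr k : ℤ_[p]) + (p:ℤ_[p]) ^ k * sct f k m ((n % p ^ l : ℕ) : ℤ_[p]) := by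
    rw [← sct_spec hf k m ((n % p ^ l : ℕ) : ℤ_[p])]
    congr 1
    push_cast
    ring
  rw [← hN] at hb
  rw [e1, e2] at hb
  refine pcancel (k := k) ?_
  linear_combination hb

lemma bf_eq_sct_small (hf : ∀ x y : ℤ_[p], ‖f x - f y‖ ≤ ‖x - y‖)
    (hbf : ∀ n : ℕ, (p : ℤ_[p]) ^ Nat.log p n * bf n = vdpB p f n)
    {k m n : ℕ} (hm : m < p ^ k) (hk : 1 ≤ k) (hn1 : 1 ≤ n) (hnp : n < p) :
    bf (m + n * p ^ k) = sct f k m (n : ℤ_[p]) - sct f k m 0 := by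
  have hl : Nat.log p n = 0 := Nat.log_eq_zero_iff.mpr (Or.inl hnp)
  have hlog := log_add_mul (p := p) hm hn1
  have hmod := mod_add_mul (p := p) (n := n) hm
  rw [hl] at hlog hmod
  set N := m + n * p ^ k with hN
  have hNp : ¬ N < p := by
    have h1 : p ^ 1 ≤ p ^ k := Nat.pow_le_pow_right hp.1.pos hk
    have h2 : p ^ k ≤ n * p ^ k := Nat.le_mul_of_pos_left _ hn1
    have := pow_one p
    omega
  have hb := hbf N
  rw [vdpB, if_neg hNp, hN] at hb
  rw [hlog, hmod] at hb
  simp only [Nat.add_zero, pow_zero, Nat.mod_one, Nat.zero_mul, Nat.add_zero] at hb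
  have e1 : f ((N : ℕ) : ℤ_[p]) = ((f (m : ℤ_[p])).appr k : ℤ_[p]) + (p:ℤ_[p]) ^ k * sct f k m (n : ℤ_[p]) := by
    rw [← sct_spec hf k m (n : ℤ_[p])]
    congr 1
    push_cast [hN]
    ring
  have e0 : f ((m : ℕ) : ℤ_[p]) = ((f (m : ℤ_[p])).appr k : ℤ_[p]) + (p:ℤ_[p]) ^ k * sct f k m 0 := by
    rw [← sct_spec hf k m 0]
    congr 1
    ring
  rw [← hN] at hb
  refine pcancel (k := k) ?_
  rw [mul_sub]
  linear_combination hb + e1 - e0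

lemma sct_zero_zero : sct f 0 0 = f := by
  funext y
  show tl 0 (f ((0:ℕ) + (p:ℤ_[p]) ^ 0 * y)) = f y
  rw [tl_zero]
  norm_num

lemma finite_of_param {α β : Type*} {Q : Set α} (hQ : Q.Finite) (P : α → β → Prop)
    (huniq : ∀ a b₁ b₂, P a b₁ → P a b₂ → b₁ = b₂) : {b | ∃ a ∈ Q, P a b}.Finite := by
  have he : {b | ∃ a ∈ Q, P a b} = ⋃ a ∈ Q, {b | P a b} := by
    ext b; simp
  rw [he]
  exact Set.Finite.biUnion hQ (fun a _ => Set.Subsingleton.finite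
    (fun b₁ h₁ b₂ h₂ => huniq a b₁ b₂ h₁ h₂))

lemma one_le_log {n : ℕ} (hn : p ≤ n) : 1 ≤ Nat.log p n := by
  have h2 := hp.1.two_le
  exact (Nat.le_log_iff_pow_le pone (by omega)).mpr (by rwa [pow_one])

lemma sct_mem_sections (hf : ∀ x y : ℤ_[p], ‖f x - f y‖ ≤ ‖x - y‖) {k m : ℕ}
    (hm : m < p ^ k) : sct f k m ∈ SectionsSet p f :=
  ⟨k, m, hm, isSection_sct hf k m⟩

/-- Decomposition of `n ≥ p` as `m + d·p^k` with `k = log n`, `1 ≤ d < p`. -/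
lemma top_digit_decomp {n : ℕ} (hn : p ≤ n) :
    n % p ^ Nat.log p n < p ^ Nat.log p n ∧ 1 ≤ n / p ^ Nat.log p n ∧
      n / p ^ Nat.log p n < p ∧ n = n % p ^ Nat.log p n + (n / p ^ Nat.log p n) * p ^ Nat.log p n := by
  have hp1 : 1 < p := pone
  set k := Nat.log p n with hk
  have hpos : 0 < p ^ k := Nat.pow_pos hp.1.pos
  refine ⟨Nat.mod_lt _ hpos, ?_, ?_, ?_⟩
  · exact Nat.div_pos (Nat.pow_log_le_self p (by omega)) hpos
  · rw [Nat.div_lt_iff_lt_mul hpos]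
    have := Nat.lt_pow_succ_log_self hp1 n
    calc n < p ^ (k + 1) := this
      _ = p * p ^ k := by rw [pow_succ]; ring
  · exact (Nat.mod_add_div' n (p ^ k)).symm

/-- Forward direction, part (a1): the range of `bf` is finite. -/
lemma range_bf_finite (hf : ∀ x y : ℤ_[p], ‖f x - f y‖ ≤ ‖x - y‖)
    (hbf : ∀ n : ℕ, (p : ℤ_[p]) ^ Nat.log p n * bf n = vdpB p f n)
    (hS : (SectionsSet p f).Finite) : (Set.range bf).Finite := by
  set S := SectionsSet p f with hSdef
  have hA : ((fun q : (ℤ_[p] → ℤ_[p]) × ℕ => q.1 (q.2 : ℤ_[p]) - q.1 0) ''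
      (S ×ˢ Set.Iio p)).Finite := ((hS.prod (Set.finite_Iio p)).image _)
  have hB : ((fun q : (ℤ_[p] → ℤ_[p]) × ℕ => q.1 (q.2 : ℤ_[p])) ''
      (S ×ˢ Set.Iio p)).Finite := ((hS.prod (Set.finite_Iio p)).image _)
  refine Set.Finite.subset (hA.union hB) ?_
  rintro x ⟨n, rfl⟩
  by_cases hn : n < p
  · right
    refine ⟨(sct f 0 0, n), ⟨sct_mem_sections hf (by norm_num), hn⟩, ?_⟩
    simp only
    rw [sct_zero_zero, bf_lt_p hbf hn]
  · left
    push_neg at hn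
    obtain ⟨hm, hd1, hdp, hrep⟩ := top_digit_decomp (p := p) hn
    have hk1 : 1 ≤ Nat.log p n := one_le_log hn
    refine ⟨(sct f (Nat.log p n) (n % p ^ Nat.log p n), n / p ^ Nat.log p n),
      ⟨sct_mem_sections hf hm, hdp⟩, ?_⟩
    simp only
    rw [← bf_eq_sct_small hf hbf hm hk1 hd1 hdp, ← hrep]

/-- Forward direction, part (a2): each `bf n` has eventually periodic digits. -/
lemma bf_evPeriodic (hf : ∀ x y : ℤ_[p], ‖f x - f y‖ ≤ ‖x - y‖)
    (hbf : ∀ n : ℕ, (p : ℤ_[p]) ^ Nat.log p n * bf n = vdpB p f n)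
    (hS : (SectionsSet p f).Finite) (n : ℕ) : HasEventuallyPeriodicDigits p (bf n) := by
  set S := SectionsSet p f with hSdef
  apply evPeriodic_of_finite_tails
  have hD1 : ((fun q : ((ℤ_[p] → ℤ_[p]) × ℕ) × ((ℤ_[p] → ℤ_[p]) × ℕ) × ℤ_[p] =>
      q.1.1 (q.1.2 : ℤ_[p]) - q.2.1.1 (q.2.1.2 : ℤ_[p]) + q.2.2) ''
      ((S ×ˢ Set.Iio p) ×ˢ (S ×ˢ Set.Iio p) ×ˢ ({0, -1} : Set ℤ_[p]))).Finite := by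
    refine Set.Finite.image _ ?_
    refine (hS.prod (Set.finite_Iio p)).prod (((hS.prod (Set.finite_Iio p))).prod ?_)
    exact (Set.finite_singleton _).insert 0
  have hD2 : ((fun q : (ℤ_[p] → ℤ_[p]) × ℕ => q.1 (q.2 : ℤ_[p])) ''
      (S ×ˢ Set.Iio p)).Finite := ((hS.prod (Set.finite_Iio p)).image _)
  refine Set.Finite.subset (hD1.union hD2) ?_
  rintro x ⟨j, rfl⟩
  simp only
  by_cases hn : n < p
  · right
    rw [bf_lt_p hbf hn, tl_f_nat]
    refine ⟨(sct f j (n % p ^ j), n / p ^ j),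
      ⟨sct_mem_sections hf (Nat.mod_lt _ (Nat.pow_pos hp.1.pos)), ?_⟩, rfl⟩
    exact lt_of_le_of_lt (Nat.div_le_self _ _) hn
  · left
    push_neg at hn
    obtain ⟨hm, hd1, hdp, hrep⟩ := top_digit_decomp (p := p) hn
    have hk1 : 1 ≤ Nat.log p n := one_le_log hn
    set k := Nat.log p n with hk
    set m := n % p ^ k with hmdef
    set d := n / p ^ k with hddef
    have hbfn : bf n = sct f k m (d : ℤ_[p]) - sct f k m ((0 : ℕ) : ℤ_[p]) := by
      rw [Nat.cast_zero]
      rw [← bf_eq_sct_small hf hbf hm hk1 hd1 hdp, ← hrep]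
    obtain ⟨c, hc01, hcc⟩ := tl_sub j (sct f k m (d : ℤ_[p])) (sct f k m ((0 : ℕ) : ℤ_[p]))
    have ht1 := tl_sct_nat hf k m j d
    have ht0 := tl_sct_nat hf k m j 0
    have hnlt : n < p * p ^ (k + j) := by
      have h2 : n < p ^ (k + 1) := Nat.lt_pow_succ_log_self pone n
      calc n < p ^ (k + 1) := h2
        _ ≤ p ^ (k + j + 1) := Nat.pow_le_pow_right hp.1.pos (by omega)
        _ = p * p ^ (k + j) := by rw [pow_succ]; ring
    have hposkj : 0 < p ^ (k + j) := Nat.pow_pos hp.1.pos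
    refine ⟨((sct f (k + j) ((m + d * p ^ k) % p ^ (k + j)),
        (m + d * p ^ k) / p ^ (k + j)),
        (sct f (k + j) ((m + 0 * p ^ k) % p ^ (k + j)),
        (m + 0 * p ^ k) / p ^ (k + j)), c),
      ⟨⟨sct_mem_sections hf (Nat.mod_lt _ hposkj), ?_⟩,
        ⟨sct_mem_sections hf (Nat.mod_lt _ hposkj), ?_⟩, hc01⟩, ?_⟩
    · simp only [Set.mem_Iio]
      rw [Nat.div_lt_iff_lt_mul hposkj, ← hrep]
      exact hnlt
    · simp only [Set.mem_Iio]
      rw [Nat.div_lt_iff_lt_mul hposkj]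
      have h0 : m + 0 * p ^ k = m := by ring
      rw [h0]
      calc m < p ^ k := hm
        _ ≤ p ^ (k + j) := Nat.pow_le_pow_right hp.1.pos (by omega)
        _ ≤ p * p ^ (k + j) := Nat.le_mul_of_pos_left _ hp.1.pos
    · simp only
      rw [hbfn, hcc, ht1, ht0]

/-- Forward direction, part (b): the `p`-kernel of `bf` is finite. -/
lemma pKernel_finite (hf : ∀ x y : ℤ_[p], ‖f x - f y‖ ≤ ‖x - y‖)
    (hbf : ∀ n : ℕ, (p : ℤ_[p]) ^ Nat.log p n * bf n = vdpB p f n)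
    (hS : (SectionsSet p f).Finite) : (pKernel p bf).Finite := by
  set S := SectionsSet p f with hSdef
  have hRb : (Set.range bf).Finite := range_bf_finite hf hbf hS
  set Q : Set (((ℤ_[p] → ℤ_[p]) × ℤ_[p]) × Bool) :=
    (S ×ˢ Set.range bf) ×ˢ (Set.univ : Set Bool) with hQdef
  have hQfin : Q.Finite := (hS.prod hRb).prod Set.finite_univ
  set P : (((ℤ_[p] → ℤ_[p]) × ℤ_[p]) × Bool) → (ℕ → ℤ_[p]) → Prop :=
    fun q s => s 0 = q.1.2 ∧ ∀ n : ℕ, 1 ≤ n → (p : ℤ_[p]) ^ Nat.log p n * s n =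
      (if n < p then (if q.2 then q.1.1 (n : ℤ_[p]) else q.1.1 (n : ℤ_[p]) - q.1.1 0)
        else vdpB p q.1.1 n) with hPdef
  refine Set.Finite.subset (finite_of_param hQfin P ?_) ?_
  · rintro q s₁ s₂ ⟨h10, h1⟩ ⟨h20, h2⟩
    funext n
    rcases Nat.eq_zero_or_pos n with rfl | hn
    · rw [h10, h20]
    · refine pcancel (k := Nat.log p n) ?_
      rw [h1 n hn, h2 n hn]
  · rintro s ⟨i, j, hj, rfl⟩
    refine ⟨((sct f i j, bf j), decide (i = 0)), ⟨⟨sct_mem_sections hf hj, ⟨j, rfl⟩⟩,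
      Set.mem_univ _⟩, ?_, ?_⟩
    · simp only
      norm_num
    · intro n hn
      simp only
      by_cases hnp : n < p
      · rw [if_pos hnp]
        have hl0 : Nat.log p n = 0 := Nat.log_eq_zero_iff.mpr (Or.inl hnp)
        rw [hl0, pow_zero, one_mul]
        by_cases hi : i = 0
        · rw [decide_eq_true hi, if_pos rfl]
          subst hi
          have hj0 : j = 0 := by simpa using hj
          subst hj0
          rw [sct_zero_zero]
          simp only [pow_zero, Nat.mul_one, Nat.zero_add]
          exact bf_lt_p hbf hnp
        · rw [decide_eq_false hi, if_neg Bool.false_ne_true]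
          exact bf_eq_sct_small hf hbf hj (by omega) hn hnp
      · rw [if_neg hnp]
        push_neg at hnp
        rw [vdpB, if_neg (by omega)]
        exact bf_eq_sct_general hf hbf hj hnp

lemma tl_one_step {V : ℕ} {x c : ℤ_[p]} {u w : ℤ}
    (hu : (V : ℤ_[p]) * x = u) (hw : (V : ℤ_[p]) * c = w) :
    ∃ u' : ℤ, (V : ℤ_[p]) * tl 1 (x + c) = u' ∧
      (p : ℤ) * u' = u + w - ((x + c).appr 1 : ℤ) * V := by
  set a : ℕ := (x + c).appr 1 with ha
  set z : ℤ := u + w - (a : ℤ) * V with hz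
  have ht := tl_spec 1 (x + c)
  have hzc : ((z : ℤ) : ℤ_[p]) = (p : ℤ_[p]) ^ 1 * ((V : ℤ_[p]) * tl 1 (x + c)) := by
    push_cast [hz]
    linear_combination -hu - hw - (V : ℤ_[p]) * ht
  have hdvd : ((p : ℤ) ^ 1) ∣ z := by
    rw [← pow_p_dvd_int_iff]
    exact ⟨(V : ℤ_[p]) * tl 1 (x + c), hzc⟩
  rw [pow_one] at hdvd
  obtain ⟨u', hu'⟩ := hdvd
  refine ⟨u', ?_, by rw [hz, ← hu']⟩
  refine pcancel (k := 1) ?_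
  rw [← hzc, hu']
  push_cast
  ring

/-- Tails of `f` at naturals have bounded numerator over denominator `V`. -/
lemma tails_bounded {bf : ℕ → ℤ_[p]}
    (hbf : ∀ n : ℕ, (p : ℤ_[p]) ^ Nat.log p n * bf n = vdpB p f n)
    (V : ℕ) (hV : 1 ≤ V) (B : ℤ) (hB : 0 ≤ B)
    (hw : ∀ c : ℤ_[p], (c = 0 ∨ (∃ n, c = bf n) ∨ (∃ n n', c = bf n - bf n')) →
      ∃ w : ℤ, |w| ≤ B ∧ (V : ℤ_[p]) * c = w) :
    ∀ k m : ℕ, m < p ^ k →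
      ∃ u : ℤ, |u| ≤ B + (p : ℤ) * V ∧ (V : ℤ_[p]) * tl k (f (m : ℤ_[p])) = u := by
  have hp2 : (2 : ℤ) ≤ (p : ℤ) := by exact_mod_cast hp.1.two_le
  have hV' : (1 : ℤ) ≤ (V : ℤ) := by exact_mod_cast hV
  set M : ℤ := B + (p : ℤ) * V with hM
  have hM0 : 0 ≤ M := by nlinarith
  intro k
  induction k with
  | zero =>
    intro m hm
    have hm0 : m = 0 := by simpa using hm
    subst hm0
    obtain ⟨w0, hw0B, hw0⟩ := hw (bf 0) (Or.inr (Or.inl ⟨0, rfl⟩))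
    refine ⟨w0, by nlinarith, ?_⟩
    rw [tl_zero]
    rw [bf_lt_p hbf hp.1.pos] at hw0
    exact hw0
  | succ k ih =>
    intro m hm
    set m0 := m % p ^ k with hm0def
    have hpos : 0 < p ^ k := Nat.pow_pos hp.1.pos
    have hm0 : m0 < p ^ k := Nat.mod_lt _ hpos
    set d := m / p ^ k with hddef
    have hrep : m = m0 + d * p ^ k := (Nat.mod_add_div' m (p ^ k)).symm
    obtain ⟨u0, hu0B, hu0⟩ := ih m0 hm0
    have hdp : d < p := by
      rw [hddef, Nat.div_lt_iff_lt_mul hpos]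
      calc m < p ^ (k + 1) := hm
        _ = p * p ^ k := by rw [pow_succ]; ring
    have hcc : ∃ cc : ℤ_[p],
        (cc = 0 ∨ (∃ n, cc = bf n) ∨ (∃ n n', cc = bf n - bf n')) ∧
        f (m : ℤ_[p]) = f (m0 : ℤ_[p]) + (p : ℤ_[p]) ^ k * cc := by
      by_cases hd : d = 0
      · rw [hd, zero_mul, add_zero] at hrep
        refine ⟨0, Or.inl rfl, ?_⟩
        rw [hrep]
        ring
      · have hd1 : 1 ≤ d := Nat.one_le_iff_ne_zero.mpr hd
        have hpkm : p ^ k ≤ m := (Nat.one_le_div_iff hpos).mp hd1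
        by_cases hk : k = 0
        · subst hk
          have hp0 : p ^ 0 = 1 := pow_zero p
          have hdm : d = m := by rw [hddef, hp0, Nat.div_one]
          have hm0z : m0 = 0 := by rw [hm0def, hp0, Nat.mod_one]
          have hmp : m < p := by omega
          refine ⟨bf m - bf 0, Or.inr (Or.inr ⟨m, 0, rfl⟩), ?_⟩
          rw [hm0z, bf_lt_p hbf hmp, bf_lt_p hbf hp.1.pos]
          push_cast
          ring
        · have hk1 : 1 ≤ k := by omega
          have hld : Nat.log p d = 0 := Nat.log_eq_zero_iff.mpr (Or.inl hdp)
          have hlog := log_add_mul (p := p) hm0 hd1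
          rw [hld] at hlog
          rw [← hrep] at hlog
          rw [Nat.add_zero] at hlog
          have hNp : ¬ m < p := by
            have h1 : p ≤ p ^ k := by
              calc p = p ^ 1 := (pow_one p).symm
                _ ≤ p ^ k := Nat.pow_le_pow_right hp.1.pos hk1
            omega
          have hb := hbf m
          rw [vdpB, if_neg hNp, hlog] at hb
          rw [← hm0def] at hb
          refine ⟨bf m, Or.inr (Or.inl ⟨m, rfl⟩), ?_⟩
          linear_combination -hb
    obtain ⟨cc, hccmem, hceq⟩ := hcc
    obtain ⟨w, hwB, hwc⟩ := hw cc hccmem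
    have step1 : tl (k + 1) (f (m : ℤ_[p])) = tl 1 (tl k (f (m0 : ℤ_[p])) + cc) := by
      rw [hceq, ← tl_tl k 1, tl_add_pow_mul]
    obtain ⟨u', hu'eq, hpu⟩ := tl_one_step hu0 hwc
    refine ⟨u', ?_, by rw [step1]; exact hu'eq⟩
    have ha : ((tl k (f (m0 : ℤ_[p])) + cc).appr 1 : ℤ) ≤ (p : ℤ) - 1 := by
      have := (tl k (f (m0 : ℤ_[p])) + cc).appr_lt 1
      rw [pow_one] at this
      have : ((tl k (f (m0 : ℤ_[p])) + cc).appr 1 : ℤ) < (p : ℤ) := by exact_mod_cast this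
      omega
    have ha0 : (0 : ℤ) ≤ ((tl k (f (m0 : ℤ_[p])) + cc).appr 1 : ℤ) := Int.natCast_nonneg _
    have hzb : |u0 + w - ((tl k (f (m0 : ℤ_[p])) + cc).appr 1 : ℤ) * V|
        ≤ M + B + ((p : ℤ) - 1) * V := by
      set a' : ℤ := ((tl k (f (m0 : ℤ_[p])) + cc).appr 1 : ℤ) with ha'
      rw [abs_le]
      obtain ⟨h1, h2⟩ := abs_le.mp hu0B
      obtain ⟨h3, h4⟩ := abs_le.mp hwB
      constructor <;> nlinarith
    have hpu' : (p : ℤ) * |u'| ≤ (p : ℤ) * M := by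
      have h1 : |(p : ℤ) * u'| = (p : ℤ) * |u'| := by
        rw [abs_mul, abs_of_nonneg (by omega : (0:ℤ) ≤ (p:ℤ))]
      rw [← h1, hpu]
      calc |u0 + w - ((tl k (f (m0 : ℤ_[p])) + cc).appr 1 : ℤ) * V|
          ≤ M + B + ((p : ℤ) - 1) * V := hzb
        _ ≤ (p : ℤ) * M := by nlinarith
    exact le_of_mul_le_mul_left hpu' (by omega)

lemma Wset_finite (V : ℕ) (hV : 1 ≤ V) (M : ℤ) :
    {x : ℤ_[p] | ∃ u : ℤ, |u| ≤ M ∧ (V : ℤ_[p]) * x = u}.Finite := by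
  have he : {x : ℤ_[p] | ∃ u : ℤ, |u| ≤ M ∧ (V : ℤ_[p]) * x = u}
      = {x : ℤ_[p] | ∃ u ∈ Set.Icc (-M) M, (V : ℤ_[p]) * x = (u : ℤ_[p])} := by
    ext x
    constructor
    · rintro ⟨u, hu1, hu2⟩
      exact ⟨u, Set.mem_Icc.mpr (abs_le.mp hu1), hu2⟩
    · rintro ⟨u, hu1, hu2⟩
      exact ⟨u, abs_le.mpr (Set.mem_Icc.mp hu1), hu2⟩
  rw [he]
  refine finite_of_param (Set.finite_Icc _ _) _ ?_
  intro u x₁ x₂ h₁ h₂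
  have hVne : (V : ℤ_[p]) ≠ 0 := Nat.cast_ne_zero.mpr (by omega)
  exact mul_left_cancel₀ hVne (h₁.trans h₂.symm)

/-- Reverse direction: automaticity implies finitely many sections. -/
lemma sections_finite (hf : ∀ x y : ℤ_[p], ‖f x - f y‖ ≤ ‖x - y‖) {bf : ℕ → ℤ_[p]}
    (hbf : ∀ n : ℕ, (p : ℤ_[p]) ^ Nat.log p n * bf n = vdpB p f n)
    (hR : (Set.range bf).Finite)
    (hEv : ∀ n : ℕ, HasEventuallyPeriodicDigits p (bf n))
    (hK : (pKernel p bf).Finite) : (SectionsSet p f).Finite := by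
  classical
  -- Step 1: a common denominator V for all values of bf
  have hVex : ∃ V : ℕ, 1 ≤ V ∧ ∀ n : ℕ, ∃ u : ℤ, (V : ℤ_[p]) * bf n = u := by
    set Rf := hR.toFinset with hRf
    have hchoice : ∀ x : {y // y ∈ Rf}, ∃ v : ℕ, 1 ≤ v ∧ ∃ u : ℤ, (v : ℤ_[p]) * (x : ℤ_[p]) = u := by
      rintro ⟨x, hx⟩
      obtain ⟨n, rfl⟩ := hR.mem_toFinset.mp hx
      exact rat_of_evPeriodic _ (hEv n)
    choose v hv u hu using hchoice
    refine ⟨∏ x ∈ Rf.attach, v x, Finset.one_le_prod' (fun x _ => hv x), ?_⟩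
    intro n
    have hx' : bf n ∈ Rf := hR.mem_toFinset.mpr ⟨n, rfl⟩
    have hsplit : ∏ y ∈ Rf.attach, v y
        = v ⟨bf n, hx'⟩ * ∏ y ∈ Rf.attach.erase ⟨bf n, hx'⟩, v y :=
      (Finset.mul_prod_erase Rf.attach v (Finset.mem_attach _ ⟨bf n, hx'⟩)).symm
    refine ⟨(∏ y ∈ Rf.attach.erase ⟨bf n, hx'⟩, v y : ℕ) * u ⟨bf n, hx'⟩, ?_⟩
    rw [hsplit]
    push_cast
    linear_combination (∏ y ∈ Rf.attach.erase ⟨bf n, hx'⟩, ((v y : ℕ) : ℤ_[p])) * hu ⟨bf n, hx'⟩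
  obtain ⟨V, hV1, hVden⟩ := hVex
  -- Step 2: a common numerator bound B over the difference set
  set Cset : Set ℤ_[p] :=
    insert 0 ((fun q : ℤ_[p] × ℤ_[p] => q.1 - q.2) ''
      ((insert 0 (Set.range bf)) ×ˢ (insert 0 (Set.range bf)))) with hCdef
  have hCfin : Cset.Finite :=
    (((hR.insert 0).prod (hR.insert 0)).image _).insert 0
  have hVC : ∀ c ∈ Cset, ∃ w : ℤ, (V : ℤ_[p]) * c = w := by
    have hone : ∀ x ∈ insert (0:ℤ_[p]) (Set.range bf), ∃ u : ℤ, (V : ℤ_[p]) * x = u := by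
      rintro x (rfl | ⟨n, rfl⟩)
      · exact ⟨0, by simp⟩
      · exact hVden n
    rintro c (rfl | ⟨⟨x, y⟩, ⟨hx, hy⟩, rfl⟩)
    · exact ⟨0, by simp⟩
    · obtain ⟨ux, hux⟩ := hone x hx
      obtain ⟨uy, huy⟩ := hone y hy
      refine ⟨ux - uy, ?_⟩
      push_cast
      linear_combination hux - huy
  set Cf := hCfin.toFinset with hCf
  have hchoice2 : ∀ c : {y // y ∈ Cf}, ∃ w : ℤ, (V : ℤ_[p]) * (c : ℤ_[p]) = w :=
    fun c => hVC c (hCfin.mem_toFinset.mp c.2)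
  choose w hwspec using hchoice2
  set B : ℤ := ∑ c ∈ Cf.attach, |w c| with hBdef
  have hB0 : 0 ≤ B := Finset.sum_nonneg (fun _ _ => abs_nonneg _)
  have hw : ∀ c : ℤ_[p], (c = 0 ∨ (∃ n, c = bf n) ∨ (∃ n n', c = bf n - bf n')) →
      ∃ w' : ℤ, |w'| ≤ B ∧ (V : ℤ_[p]) * c = w' := by
    intro c hc
    have hcmem : c ∈ Cset := by
      rcases hc with rfl | ⟨n, rfl⟩ | ⟨n, n', rfl⟩
      · exact Set.mem_insert _ _
      · exact Set.mem_insert_iff.mpr (Or.inr ⟨(bf n, 0),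
          ⟨Set.mem_insert_iff.mpr (Or.inr ⟨n, rfl⟩), Set.mem_insert _ _⟩, sub_zero _⟩)
      · exact Set.mem_insert_iff.mpr (Or.inr ⟨(bf n, bf n'),
          ⟨Set.mem_insert_iff.mpr (Or.inr ⟨n, rfl⟩),
            Set.mem_insert_iff.mpr (Or.inr ⟨n', rfl⟩)⟩, rfl⟩)
    have hc' : c ∈ Cf := hCfin.mem_toFinset.mpr hcmem
    refine ⟨w ⟨c, hc'⟩, ?_, by simpa using hwspec ⟨c, hc'⟩⟩
    exact Finset.single_le_sum (f := fun c => |w c|) (fun _ _ => abs_nonneg _)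
      (Finset.mem_attach _ _)
  -- Step 3: tails of f at naturals are bounded rationals
  have htails := tails_bounded hbf V hV1 B hB0 hw
  set M : ℤ := B + (p : ℤ) * V with hM
  -- Step 4: the finite set W
  set W : Set ℤ_[p] := {x : ℤ_[p] | ∃ u : ℤ, |u| ≤ M ∧ (V : ℤ_[p]) * x = u} with hWdef
  have hWfin : W.Finite := Wset_finite V hV1 M
  -- Step 5: the injection
  set Q : Set ((ℤ_[p] × (ℕ → ℤ_[p])) × Bool) :=
    (W ×ˢ pKernel p bf) ×ˢ (Set.univ : Set Bool) with hQdef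
  have hQfin : Q.Finite := (hWfin.prod hK).prod Set.finite_univ
  set P : ((ℤ_[p] × (ℕ → ℤ_[p])) × Bool) → (ℤ_[p] → ℤ_[p]) → Prop := fun q h =>
    Continuous h ∧ h 0 = q.1.1 ∧ ∀ n : ℕ, 1 ≤ n →
      h (n : ℤ_[p]) = if q.2 = true ∧ n < p then q.1.2 n
        else h ((n % p ^ Nat.log p n : ℕ) : ℤ_[p])
          + (p : ℤ_[p]) ^ Nat.log p n * q.1.2 n with hPdef
  refine Set.Finite.subset (finite_of_param hQfin P ?_) ?_
  · -- uniqueness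
    rintro q h₁ h₂ ⟨hc1, h01, hr1⟩ ⟨hc2, h02, hr2⟩
    have hnat : ∀ n : ℕ, h₁ (n : ℤ_[p]) = h₂ (n : ℤ_[p]) := by
      intro n
      induction n using Nat.strong_induction_on with
      | _ n ih =>
        rcases Nat.eq_zero_or_pos n with rfl | hn
        · rw [Nat.cast_zero, h01, h02]
        · rw [hr1 n hn, hr2 n hn]
          by_cases hcnd : q.2 = true ∧ n < p
          · rw [if_pos hcnd, if_pos hcnd]
          · rw [if_neg hcnd, if_neg hcnd]
            have hlt : n % p ^ Nat.log p n < n := by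
              by_cases hnp : n < p
              · have hl0 : Nat.log p n = 0 := Nat.log_eq_zero_iff.mpr (Or.inl hnp)
                rw [hl0, pow_zero, Nat.mod_one]
                omega
              · push_neg at hnp
                have := hp.1.two_le
                exact lt_of_lt_of_le
                  (Nat.mod_lt _ (Nat.pow_pos hp.1.pos))
                  (Nat.pow_log_le_self p (by omega))
            rw [ih _ hlt]
    refine Continuous.ext_on (s := Set.range (Nat.cast : ℕ → ℤ_[p]))
      PadicInt.denseRange_natCast hc1 hc2 ?_
    rintro _ ⟨n, rfl⟩
    exact hnat n
  · -- coverage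
    intro h hmem
    rw [sectionsSet_eq hf] at hmem
    obtain ⟨k, m, hm, rfl⟩ := hmem
    have hsct0 : sct f k m 0 = tl k (f (m : ℤ_[p])) := by
      rw [sct]
      norm_num
    refine ⟨((sct f k m 0, fun n => bf (m + n * p ^ k)), decide (k = 0)),
      ⟨⟨?_, ⟨k, m, hm, rfl⟩⟩, Set.mem_univ _⟩,
      continuous_of_lip (sct_lip hf k m), rfl, ?_⟩
    · rw [hWdef]
      show ∃ u : ℤ, |u| ≤ M ∧ (V : ℤ_[p]) * sct f k m 0 = u
      rw [hsct0]
      exact htails k m hm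
    · intro n hn
      simp only
      by_cases hcnd : decide (k = 0) = true ∧ n < p
      · rw [if_pos hcnd]
        obtain ⟨hk0, hnp⟩ := hcnd
        have hk0' : k = 0 := of_decide_eq_true hk0
        subst hk0'
        have hm0 : m = 0 := by simpa using hm
        subst hm0
        rw [sct_zero_zero]
        rw [show 0 + n * p ^ 0 = n by ring]
        exact (bf_lt_p hbf hnp).symm
      · rw [if_neg hcnd]
        by_cases hnp : n < p
        · have hk1 : 1 ≤ k := by
            rcases Nat.eq_zero_or_pos k with rfl | h'
            · exact absurd ⟨decide_eq_true rfl, hnp⟩ hcnd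
            · omega
          have hsmall := bf_eq_sct_small hf hbf hm hk1 hn hnp
          have hl0 : Nat.log p n = 0 := Nat.log_eq_zero_iff.mpr (Or.inl hnp)
          rw [hl0]
          simp only [pow_zero, Nat.mod_one, one_mul, Nat.cast_zero]
          linear_combination -hsmall
        · push_neg at hnp
          have hgen := bf_eq_sct_general hf hbf hm hnp
          linear_combination -hgen

end AuxVdP

/-- A 1-Lipschitz `f : ℤ_p → ℤ_p` has finitely many sections iff (a) its reduced van der
Put coefficients form a finite set of elements with eventually periodic digit expansions,
and (b) the sequence of reduced van der Put coefficients is `p`-automatic (finite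
`p`-kernel). -/
theorem finite_sections_iff_automatic (p : ℕ) [Fact p.Prime]
    (f : PadicInt p → PadicInt p)
    (hf : ∀ x y : PadicInt p, ‖f x - f y‖ ≤ ‖x - y‖)
    -- `bf` is the sequence of reduced van der Put coefficients of `f`
    (bf : ℕ → PadicInt p)
    (hbf : ∀ n : ℕ, (p : PadicInt p) ^ Nat.log p n * bf n = vdpB p f n) :
    (SectionsSet p f).Finite ↔
      ((Set.range bf).Finite ∧
        (∀ n : ℕ, HasEventuallyPeriodicDigits p (bf n)) ∧
        (pKernel p bf).Finite) := by
  constructor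
  · intro hS
    exact ⟨range_bf_finite hf hbf hS, bf_evPeriodic hf hbf hS, pKernel_finite hf hbf hS⟩
  · rintro ⟨hR, hEv, hK⟩
    exact sections_finite hf hbf hR hEv hK
end

section
/- Let p be a prime and f : ℤ_p → ℤ_p a 1-Lipschitz function whose set S(f) of sections at all vertices (k, m), k ≥ 0, 0 ≤ m < p^k, has at most q elements. Then for every integer i with 0 ≤ i < p, the digit expansion (a_j)_{j≥0} of f(i) ∈ ℤ_p is eventually periodic with period at most q and preperiod at most q + 1: there exists an integer m with 1 ≤ m ≤ q such that a_{j+m} = a_j for all j ≥ q + 1. -/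
section Aux

variable {p : ℕ} [Fact p.Prime]

private lemma aux_summable (a : ℕ → ℕ) :
    Summable (fun j => (a j : PadicInt p) * (p : PadicInt p) ^ j) := by
  have hp : 1 < p := (Fact.out : p.Prime).one_lt
  apply Summable.of_norm_bounded (g := fun j => ((p : ℝ)⁻¹) ^ j)
  · exact summable_geometric_of_lt_one (by positivity)
      (inv_lt_one_of_one_lt₀ (by exact_mod_cast hp))
  · intro j
    calc ‖(a j : PadicInt p) * (p : PadicInt p) ^ j‖
        ≤ ‖(a j : PadicInt p)‖ * ‖(p : PadicInt p) ^ j‖ := norm_mul_le _ _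
      _ ≤ 1 * ‖(p : PadicInt p) ^ j‖ :=
          mul_le_mul_of_nonneg_right (PadicInt.norm_le_one _) (norm_nonneg _)
      _ = ((p : ℝ)⁻¹) ^ j := by
          rw [one_mul, PadicInt.norm_p_pow, zpow_neg, zpow_natCast, inv_pow]

/-- tail decomposition of a digit series -/
private lemma aux_tail (a : ℕ → ℕ) (k : ℕ) :
    (∑' j : ℕ, (a j : PadicInt p) * (p : PadicInt p) ^ j)
      = (∑ j ∈ Finset.range k, (a j : PadicInt p) * (p : PadicInt p) ^ j)
        + (p : PadicInt p) ^ k * ∑' j : ℕ, (a (j + k) : PadicInt p) * (p : PadicInt p) ^ j := by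
  have h := Summable.sum_add_tsum_nat_add (f := fun j => (a j : PadicInt p) * (p : PadicInt p) ^ j) k
    (aux_summable a)
  rw [← h]
  congr 1
  calc (∑' i : ℕ, (a (i + k) : PadicInt p) * (p : PadicInt p) ^ (i + k))
      = ∑' i : ℕ, (p : PadicInt p) ^ k * ((a (i + k) : PadicInt p) * (p : PadicInt p) ^ i) :=
        tsum_congr (fun j => by ring)
    _ = (p : PadicInt p) ^ k * ∑' i : ℕ, (a (i + k) : PadicInt p) * (p : PadicInt p) ^ i :=
        Summable.tsum_mul_left _ (aux_summable (fun j => a (j + k)))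

private lemma aux_nat_eq {A B k : ℕ} (hA : A < p ^ k) (hB : B < p ^ k)
    (h : (p : PadicInt p) ^ k ∣ (A : PadicInt p) - (B : PadicInt p)) : A = B := by
  have h' : (p : PadicInt p) ^ k ∣ (((A : ℤ) - (B : ℤ) : ℤ) : PadicInt p) := by push_cast; exact h
  rw [PadicInt.pow_p_dvd_int_iff] at h'
  have habs : |(A : ℤ) - (B : ℤ)| < ((p ^ k : ℕ) : ℤ) := by
    rw [abs_sub_lt_iff]
    constructor <;> omega
  have hd : ((p ^ k : ℕ) : ℤ) ∣ (A : ℤ) - (B : ℤ) := by exact_mod_cast h'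
  have := Int.eq_zero_of_abs_lt_dvd hd habs
  omega

private lemma aux_partial_lt (a : ℕ → ℕ) (ha : ∀ j, a j < p) (k : ℕ) :
    (∑ j ∈ Finset.range k, a j * p ^ j) < p ^ k := by
  have hp : 1 < p := (Fact.out : p.Prime).one_lt
  induction k with
  | zero => simp
  | succ k ih =>
      rw [Finset.sum_range_succ, pow_succ]
      have h1 : a k * p ^ k ≤ (p - 1) * p ^ k :=
        Nat.mul_le_mul_right _ (by have := ha k; omega)
      have h2 : (p - 1) * p ^ k + p ^ k = p ^ k * p := by
        have h3 : p - 1 + 1 = p := by omega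
        calc (p - 1) * p ^ k + p ^ k = (p - 1 + 1) * p ^ k := by ring
          _ = p ^ k * p := by rw [h3]; ring
      omega

private lemma aux_dvd_of_norm_le {x : PadicInt p} {k : ℕ}
    (h : ‖x‖ ≤ (p : ℝ) ^ (-(k : ℤ))) : (p : PadicInt p) ^ k ∣ x := by
  rw [PadicInt.norm_le_pow_iff_mem_span_pow, Ideal.mem_span_singleton] at h
  exact h

/-- uniqueness of digit expansions -/
private lemma aux_digits_unique (b c : ℕ → ℕ) (hb : ∀ j, b j < p) (hc : ∀ j, c j < p)
    (h : (∑' j : ℕ, (b j : PadicInt p) * (p : PadicInt p) ^ j)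
        = ∑' j : ℕ, (c j : PadicInt p) * (p : PadicInt p) ^ j) :
    ∀ n, b n = c n := by
  have hp : 0 < p := (Fact.out : p.Prime).pos
  have key : ∀ n, (∑ j ∈ Finset.range n, b j * p ^ j) = ∑ j ∈ Finset.range n, c j * p ^ j := by
    intro n
    apply aux_nat_eq (aux_partial_lt b hb n) (aux_partial_lt c hc n)
    have hB := aux_tail (p := p) b n
    have hC := aux_tail (p := p) c n
    rw [hB, hC] at h
    have : ((∑ j ∈ Finset.range n, b j * p ^ j : ℕ) : PadicInt p)
        - ((∑ j ∈ Finset.range n, c j * p ^ j : ℕ) : PadicInt p)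
        = (p : PadicInt p) ^ n *
          ((∑' j : ℕ, (c (j + n) : PadicInt p) * (p : PadicInt p) ^ j)
            - ∑' j : ℕ, (b (j + n) : PadicInt p) * (p : PadicInt p) ^ j) := by
      push_cast
      linear_combination h
    exact ⟨_, this⟩
  intro n
  have h1 := key (n + 1)
  have h2 := key n
  rw [Finset.sum_range_succ, Finset.sum_range_succ, h2] at h1
  have h3 : b n * p ^ n = c n * p ^ n := by omega
  exact Nat.eq_of_mul_eq_mul_right (pow_pos hp n) h3

end Aux

/-- If a 1-Lipschitz `f : ℤ_p → ℤ_p` has at most `q` sections, then for every `0 ≤ i < p`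
the digit expansion of `f(i)` is eventually periodic with period at most `q` and
preperiod at most `q + 1`. -/
theorem digits_of_image_eventually_periodic (p : ℕ) [Fact p.Prime]
    (f : PadicInt p → PadicInt p)
    (hf : ∀ x y : PadicInt p, ‖f x - f y‖ ≤ ‖x - y‖)
    (q : ℕ) (hfin : (SectionsSet p f).Finite) (hcard : (SectionsSet p f).ncard ≤ q) :
    ∀ i : ℕ, i < p →
      ∀ a : ℕ → ℕ, (∀ j, a j < p) →
        f (i : PadicInt p) = (∑' j : ℕ, (a j : PadicInt p) * (p : PadicInt p) ^ j) →
        ∃ m : ℕ, 1 ≤ m ∧ m ≤ q ∧ ∀ j : ℕ, q + 1 ≤ j → a (j + m) = a j := by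
  intro i hi a ha hfa
  have hp : 1 < p := (Fact.out : p.Prime).one_lt
  set P : PadicInt p := (p : PadicInt p) with hP
  -- partial sums and tails
  set R : ℕ → ℕ := fun k => ∑ j ∈ Finset.range k, a j * p ^ j with hR
  set g : ℕ → PadicInt p := fun k => ∑' j : ℕ, (a (j + k) : PadicInt p) * P ^ j with hg
  have hRlt : ∀ k, R k < p ^ k := fun k => aux_partial_lt a ha k
  have key : ∀ k, f (i : PadicInt p) = (R k : PadicInt p) + P ^ k * g k := by
    intro k
    rw [hfa, aux_tail a k]
    congr 1
    push_cast [hR]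
    rfl
  -- divisibility giving the sections
  have hdvd : ∀ k (y : PadicInt p), P ^ k ∣ f ((i : PadicInt p) + P ^ k * y) - (R k : PadicInt p) := by
    intro k y
    have h1 : P ^ k ∣ f ((i : PadicInt p) + P ^ k * y) - f (i : PadicInt p) := by
      apply aux_dvd_of_norm_le
      calc ‖f ((i : PadicInt p) + P ^ k * y) - f (i : PadicInt p)‖
          ≤ ‖(i : PadicInt p) + P ^ k * y - (i : PadicInt p)‖ := hf _ _
        _ = ‖P ^ k * y‖ := by ring_nf
        _ ≤ ‖P ^ k‖ * ‖y‖ := norm_mul_le _ _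
        _ ≤ ‖P ^ k‖ * 1 :=
            mul_le_mul_of_nonneg_left (PadicInt.norm_le_one _) (norm_nonneg _)
        _ = (p : ℝ) ^ (-(k : ℤ)) := by
            rw [mul_one, PadicInt.norm_p_pow]
    have h2 : P ^ k ∣ f (i : PadicInt p) - (R k : PadicInt p) := ⟨g k, by rw [key k]; ring⟩
    have := dvd_add h1 h2
    simpa using this
  -- the section at level k
  set h : ℕ → PadicInt p → PadicInt p := fun k y => (hdvd k y).choose with hh
  have hspec : ∀ k (y : PadicInt p),
      f ((i : PadicInt p) + P ^ k * y) = (R k : PadicInt p) + P ^ k * h k y := by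
    intro k y
    have := (hdvd k y).choose_spec
    rw [hh]
    linear_combination this
  have hmem : ∀ k, 1 ≤ k → h k ∈ SectionsSet p f := by
    intro k hk
    refine ⟨k, i, ?_, R k, hRlt k, hspec k⟩
    calc i < p := hi
      _ = p ^ 1 := (pow_one p).symm
      _ ≤ p ^ k := Nat.pow_le_pow_right hp.le hk
  -- pigeonhole
  have hcard' : hfin.toFinset.card ≤ q := by
    rwa [Set.ncard_eq_toFinset_card _ hfin] at hcard
  obtain ⟨s, hs, t, ht, hne, heq⟩ :=
    Finset.exists_ne_map_eq_of_card_lt_of_maps_to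
      (s := Finset.Icc 1 (q + 1)) (t := hfin.toFinset)
      (by rw [Nat.card_Icc]; omega)
      (fun k hk => by
        simp only [Finset.mem_coe, Set.Finite.mem_toFinset]
        exact hmem k (Finset.mem_Icc.mp hk).1)
  simp only [Finset.mem_Icc] at hs ht
  -- wlog s < t
  obtain ⟨s, t, hs1, ht2, hst, heq⟩ :
      ∃ s t : ℕ, 1 ≤ s ∧ t ≤ q + 1 ∧ s < t ∧ h s = h t := by
    rcases lt_or_gt_of_ne hne with hlt | hgt
    · exact ⟨s, t, hs.1, ht.2, hlt, heq⟩
    · exact ⟨t, s, ht.1, hs.2, hgt, heq.symm⟩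
  -- from section equality, tails agree
  have hPk : ∀ k : ℕ, (P : PadicInt p) ^ k ≠ 0 := by
    intro k
    apply pow_ne_zero
    rw [hP]
    exact_mod_cast (Fact.out : p.Prime).ne_zero
  have hg0 : ∀ k, h k 0 = g k := by
    intro k
    have h1 := hspec k 0
    rw [mul_zero, add_zero] at h1
    rw [key k] at h1
    exact (mul_left_cancel₀ (hPk k) (add_left_cancel h1)).symm
  have hgst : g s = g t := by rw [← hg0, ← hg0, heq]
  have hdig : ∀ n, a (n + s) = a (n + t) :=
    aux_digits_unique (fun j => a (j + s)) (fun j => a (j + t))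
      (fun j => ha _) (fun j => ha _) hgst
  refine ⟨t - s, by omega, by omega, ?_⟩
  intro j hj
  have h1 := hdig (j - s)
  have h2 : j - s + s = j := by omega
  have h3 : j - s + t = j + (t - s) := by omega
  rw [h2, h3] at h1
  exact h1.symm
end
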